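/- arXiv:1401.0780 — 2 statements merged into one kernel-verified Lean document; each statement's English description precedes it below -/
import Mathlib

section
/- Suppose G_1, G_2, … are i.i.d. standard Gaussian random variables and {α_{jk} : j,k ≥ 1} are deterministic real numbers such that the quadratic forms ∑_{j,k=1}^{2n} α_{jk} G_j G_k converge in probability, as n → ∞, to some finite real random variable Z. If α_{11} ≠ 0, then Z has a continuous distribution, i.e., P(Z = z) = 0 for every z ∈ ℝ. -/
open MeasureTheory ProbabilityTheory Filter Real
open scoped ENNReal NNReal Topology

noncomputable section

lemma gauss_quad_bound (t a b c : ℝ) :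
    ‖∫ x : ℝ, Complex.exp (Complex.I * t * (a * x ^ 2 + b * x + c)) ∂(gaussianReal 0 1)‖
      ≤ (1 + 4 * t ^ 2 * a ^ 2) ^ (-(1/4) : ℝ) := by
  set β : ℂ := Complex.I * t * a - 1/2 with hβ
  set γ : ℂ := Complex.I * t * b with hγ
  set δ : ℂ := Complex.I * t * c with hδ
  have hβre : β.re = -(1/2) := by simp [hβ]
  have hβim : β.im = t * a := by simp [hβ]
  have hβre' : β.re < 0 := by rw [hβre]; norm_num
  set s : ℝ := 1/4 + t ^ 2 * a ^ 2 with hs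
  have hs0 : 0 < s := by positivity
  have hβabs : ‖β‖ = Real.sqrt s := by
    rw [Complex.norm_def, Complex.normSq_apply, hβre, hβim]
    congr 1
    rw [hs]; ring
  have hβne : β ≠ 0 := fun h => by simp [h] at hβre'
  -- rewrite the integral over the gaussian as an integral over volume
  have h1 : (∫ x : ℝ, Complex.exp (Complex.I * t * (a * x ^ 2 + b * x + c))
        ∂(gaussianReal 0 1))
      = ∫ x : ℝ, ((gaussianPDFReal 0 1 x).toNNReal : ℝ) •
          Complex.exp (Complex.I * t * (a * x ^ 2 + b * x + c)) := by
    rw [gaussianReal_of_var_ne_zero _ one_ne_zero]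
    have : gaussianPDF 0 1 = fun x => ((gaussianPDFReal 0 1 x).toNNReal : ℝ≥0∞) := rfl
    rw [this, integral_withDensity_eq_integral_smul
      ((measurable_gaussianPDFReal 0 1).real_toNNReal)]
    simp [NNReal.smul_def]
  have h2 : ∀ x : ℝ, ((gaussianPDFReal 0 1 x).toNNReal : ℝ) •
        Complex.exp (Complex.I * t * (a * x ^ 2 + b * x + c))
      = (Real.sqrt (2 * π))⁻¹ • Complex.exp (β * x ^ 2 + γ * x + δ) := by
    intro x
    have hnn : 0 ≤ gaussianPDFReal 0 1 x := gaussianPDFReal_nonneg 0 1 x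
    rw [Real.coe_toNNReal _ hnn]
    have hpdf : gaussianPDFReal 0 1 x
        = (Real.sqrt (2 * π))⁻¹ * Real.exp (-(x ^ 2) / 2) := by
      simp [gaussianPDFReal]
    rw [hpdf, mul_smul]
    congr 1
    rw [Complex.real_smul, Complex.ofReal_exp, ← Complex.exp_add]
    congr 1
    push_cast
    rw [hβ, hγ, hδ]
    ring
  rw [h1]
  simp_rw [h2]
  rw [integral_smul, integral_cexp_quadratic hβre' γ δ]
  rw [norm_smul, norm_mul]
  have habs1 : ‖(↑π / -β) ^ (1 / 2 : ℂ)‖ = (π / Real.sqrt s) ^ ((1:ℝ)/2) := by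
    have : ((1 / 2 : ℂ)) = ((1/2 : ℝ) : ℂ) := by norm_num
    rw [this, Complex.norm_cpow_real]
    congr 1
    rw [norm_div, norm_neg, hβabs, Complex.norm_real, Real.norm_eq_abs, abs_of_pos pi_pos]
  have habs2 : ‖Complex.exp (δ - γ ^ 2 / (4 * β))‖ ≤ 1 := by
    rw [Complex.norm_exp, Real.exp_le_one_iff]
    have hδre : δ.re = 0 := by simp [hδ]
    have hγsq : γ ^ 2 = ((-(t^2 * b^2) : ℝ) : ℂ) := by
      rw [hγ]
      have : (Complex.I * t * b) ^ 2 = Complex.I ^ 2 * (t:ℂ) ^ 2 * (b:ℂ) ^ 2 := by ring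
      rw [this, Complex.I_sq]
      push_cast
      ring
    rw [Complex.sub_re, hδre, zero_sub, neg_nonpos]
    rw [hγsq, Complex.div_re]
    have h4β : (4 * β).re = -2 := by simp [hβre, Complex.mul_re]; norm_num
    have h4βim : (4 * β).im = 4 * (t * a) := by simp [hβim, Complex.mul_im]
    have hnormsq : Complex.normSq (4 * β) = 16 * s := by
      rw [Complex.normSq_apply, h4β, h4βim, hs]; ring
    rw [h4β, h4βim, hnormsq]
    rw [Complex.ofReal_re, Complex.ofReal_im]
    have h16s : (0:ℝ) < 16 * s := by positivity
    have : -(t ^ 2 * b ^ 2) * -2 / (16 * s) + 0 * (4 * (t * a)) / (16 * s)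
        = (2 * (t ^ 2 * b ^ 2)) / (16 * s) := by ring
    rw [this]
    positivity
  have hnorm3 : ‖((Real.sqrt (2 * π))⁻¹ : ℝ)‖ = (Real.sqrt (2 * π))⁻¹ := by
    rw [Real.norm_eq_abs, abs_of_nonneg]; positivity
  calc ‖((Real.sqrt (2 * π))⁻¹ : ℝ)‖ * (‖(↑π / -β) ^ (1 / 2 : ℂ)‖ *
        ‖Complex.exp (δ - γ ^ 2 / (4 * β))‖)
      ≤ (Real.sqrt (2 * π))⁻¹ * ((π / Real.sqrt s) ^ ((1:ℝ)/2) * 1) := by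
        rw [hnorm3, habs1]
        gcongr
    _ = (1 + 4 * t ^ 2 * a ^ 2) ^ (-(1/4) : ℝ) := by
        rw [mul_one]
        have h4s : 1 + 4 * t ^ 2 * a ^ 2 = 4 * s := by rw [hs]; ring
        rw [h4s]
        have h2π : (0:ℝ) < 2 * π := by positivity
        have e1 : (Real.sqrt (2 * π))⁻¹ = (2 * π) ^ (-(1/2) : ℝ) := by
          rw [Real.sqrt_eq_rpow, ← Real.rpow_neg h2π.le]
        have e2 : (π / Real.sqrt s) ^ ((1:ℝ)/2) = π ^ ((1:ℝ)/2) * s ^ (-(1/4) : ℝ) := by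
          rw [Real.div_rpow pi_pos.le (Real.sqrt_nonneg s), Real.sqrt_eq_rpow,
            ← Real.rpow_mul hs0.le, div_eq_mul_inv, ← Real.rpow_neg hs0.le]
          norm_num
        rw [e1, e2, Real.mul_rpow (by norm_num : (0:ℝ) ≤ 2) pi_pos.le,
          Real.mul_rpow (by norm_num : (0:ℝ) ≤ 4) hs0.le]
        have e3 : π ^ (-(1/2) : ℝ) * (π ^ ((1:ℝ)/2) * s ^ (-(1/4) : ℝ))
            = s ^ (-(1/4) : ℝ) := by
          rw [← mul_assoc, ← Real.rpow_add pi_pos]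
          norm_num
        have e4 : (4:ℝ) ^ (-(1/4) : ℝ) = 2 ^ (-(1/2) : ℝ) := by
          have : (4:ℝ) = 2 ^ (2:ℝ) := by
            rw [show (2:ℝ) ^ (2:ℝ) = 2 ^ (2:ℕ) from Real.rpow_natCast 2 2]; norm_num
          rw [this, ← Real.rpow_mul (by norm_num : (0:ℝ) ≤ 2)]
          norm_num
        rw [mul_assoc, e3, e4]

lemma charfun_Sn_bound {Ω : Type} [MeasurableSpace Ω] (P : Measure Ω)
    [IsProbabilityMeasure P] (G : ℕ → Ω → ℝ)
    (hGmeas : ∀ j, Measurable (G j))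
    (hGindep : iIndepFun G P)
    (hGgauss : ∀ j, P.map (G j) = gaussianReal 0 1)
    (α : ℕ → ℕ → ℝ) (t : ℝ) {n : ℕ} (hn : 1 ≤ n) :
    ‖∫ ω, Complex.exp (Complex.I * t *
        (∑ j ∈ Finset.Icc 1 (2 * n), ∑ k ∈ Finset.Icc 1 (2 * n),
          α j k * (G j ω * G k ω))) ∂P‖
      ≤ (1 + 4 * t ^ 2 * (α 1 1) ^ 2) ^ (-(1/4) : ℝ) := by
  classical
  set T : Finset ℕ := Finset.Icc 2 (2 * n) with hT
  have h1T : (1 : ℕ) ∉ T := by simp [hT]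
  have hIcc : Finset.Icc 1 (2 * n) = insert 1 T := by
    ext x
    simp only [hT, Finset.mem_Icc, Finset.mem_insert]
    omega
  set B : Ω → ℝ := fun ω => ∑ k ∈ T.attach, (α 1 ↑k + α ↑k 1) * G ↑k ω with hB
  set C : Ω → ℝ := fun ω => ∑ j ∈ T.attach, ∑ k ∈ T.attach,
      α ↑j ↑k * (G ↑j ω * G ↑k ω) with hC
  have hBsum : ∀ ω, B ω = ∑ k ∈ T, (α 1 k + α k 1) * G k ω := fun ω =>
    Finset.sum_attach T fun k => (α 1 k + α k 1) * G k ω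
  have hCsum : ∀ ω, C ω = ∑ j ∈ T, ∑ k ∈ T, α j k * (G j ω * G k ω) := by
    intro ω
    calc C ω = ∑ j ∈ T.attach, ∑ k ∈ T, α ↑j k * (G ↑j ω * G k ω) :=
          Finset.sum_congr rfl fun j _ => Finset.sum_attach T (fun k => α ↑j k * (G ↑j ω * G k ω))
      _ = _ := Finset.sum_attach T (fun j => ∑ k ∈ T, α j k * (G j ω * G k ω))
  -- decomposition of the quadratic form
  have hsum : ∀ ω, (∑ j ∈ Finset.Icc 1 (2 * n), ∑ k ∈ Finset.Icc 1 (2 * n),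
        α j k * (G j ω * G k ω))
      = α 1 1 * (G 1 ω) ^ 2 + B ω * G 1 ω + C ω := by
    intro ω
    rw [hIcc, Finset.sum_insert h1T, Finset.sum_insert h1T]
    have hrest : ∀ j ∈ T, (∑ k ∈ insert 1 T, α j k * (G j ω * G k ω))
        = α j 1 * (G j ω * G 1 ω) + ∑ k ∈ T, α j k * (G j ω * G k ω) :=
      fun j _ => Finset.sum_insert h1T
    rw [Finset.sum_congr rfl hrest, Finset.sum_add_distrib, hBsum, hCsum,
      Finset.sum_mul]
    have e1 : ∑ k ∈ T, (α 1 k + α k 1) * G k ω * G 1 ω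
        = (∑ k ∈ T, α 1 k * (G 1 ω * G k ω)) + ∑ k ∈ T, α k 1 * (G k ω * G 1 ω) := by
      rw [← Finset.sum_add_distrib]
      exact Finset.sum_congr rfl fun k _ => by ring
    rw [e1]
    ring
  have hBmeas : Measurable B := by
    apply Finset.measurable_sum
    intro k _
    exact measurable_const.mul (hGmeas k)
  have hCmeas : Measurable C := by
    apply Finset.measurable_sum; intro j _
    apply Finset.measurable_sum; intro k _
    exact measurable_const.mul ((hGmeas _).mul (hGmeas _))
  have hST : Disjoint ({1} : Finset ℕ) T := by simp [hT]
  have hind0 := hGindep.indepFun_finset {1} T hST hGmeas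
  have hφ : Measurable (fun v : ({x : ℕ // x ∈ ({1} : Finset ℕ)} → ℝ) =>
      v ⟨1, Finset.mem_singleton_self 1⟩) := measurable_pi_apply _
  have hψ : Measurable (fun v : ({x : ℕ // x ∈ T} → ℝ) =>
      ((∑ k ∈ T.attach, (α 1 ↑k + α ↑k 1) * v k),
       (∑ j ∈ T.attach, ∑ k ∈ T.attach, α ↑j ↑k * (v j * v k)))) := by
    refine Measurable.prodMk ?_ ?_
    · apply Finset.measurable_sum; intro k _
      exact measurable_const.mul (measurable_pi_apply _)
    · apply Finset.measurable_sum; intro j _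
      apply Finset.measurable_sum; intro k _
      exact measurable_const.mul ((measurable_pi_apply _).mul (measurable_pi_apply _))
  have hXY : IndepFun (G 1) (fun ω => (B ω, C ω)) P := hind0.comp hφ hψ
  have hprod : P.map (fun ω => (G 1 ω, (B ω, C ω)))
      = (P.map (G 1)).prod (P.map (fun ω => (B ω, C ω))) :=
    (indepFun_iff_map_prod_eq_prod_map_map (hGmeas 1).aemeasurable
      ((hBmeas.prodMk hCmeas).aemeasurable)).mp hXY
  set F : ℝ × (ℝ × ℝ) → ℂ := fun p =>
    Complex.exp (Complex.I * t * ((α 1 1 : ℂ) * (p.1 : ℂ) ^ 2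
      + (p.2.1 : ℂ) * (p.1 : ℂ) + (p.2.2 : ℂ))) with hF
  have hFcont : Continuous F := by
    apply Complex.continuous_exp.comp
    fun_prop
  have hFnorm : ∀ p, ‖F p‖ = 1 := by
    intro p
    have harg : F p = Complex.exp (Complex.I * t
        * ((α 1 1 * p.1 ^ 2 + p.2.1 * p.1 + p.2.2 : ℝ) : ℂ)) := by
      rw [hF]; push_cast; ring_nf
    have harg2 : Complex.I * t * ((α 1 1 * p.1 ^ 2 + p.2.1 * p.1 + p.2.2 : ℝ) : ℂ)
        = Complex.I * ((t * (α 1 1 * p.1 ^ 2 + p.2.1 * p.1 + p.2.2) : ℝ) : ℂ) := by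
      push_cast; ring
    rw [harg, harg2, Complex.norm_exp, Complex.I_mul_re,
      Complex.ofReal_im, neg_zero, Real.exp_zero]
  have hprob2 : IsProbabilityMeasure (P.map fun ω => (B ω, C ω)) :=
    Measure.isProbabilityMeasure_map (hBmeas.prodMk hCmeas).aemeasurable
  have hprob1 : IsProbabilityMeasure (P.map (G 1)) := by
    rw [hGgauss 1]; infer_instance
  have hint : Integrable F ((P.map (G 1)).prod (P.map fun ω => (B ω, C ω))) := by
    refine (integrable_const (1 : ℝ)).mono' hFcont.aestronglyMeasurable ?_
    exact ae_of_all _ fun p => le_of_eq (hFnorm p)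
  have key : (∫ ω, Complex.exp (Complex.I * t *
        (∑ j ∈ Finset.Icc 1 (2 * n), ∑ k ∈ Finset.Icc 1 (2 * n),
          α j k * (G j ω * G k ω))) ∂P)
      = ∫ y, ∫ x, F (x, y) ∂(P.map (G 1)) ∂(P.map fun ω => (B ω, C ω)) := by
    have e2 : (∫ ω, Complex.exp (Complex.I * t *
          (∑ j ∈ Finset.Icc 1 (2 * n), ∑ k ∈ Finset.Icc 1 (2 * n),
            α j k * (G j ω * G k ω))) ∂P)
        = ∫ ω, F (G 1 ω, (B ω, C ω)) ∂P := by
      refine integral_congr_ae (Filter.EventuallyEq.of_eq (funext fun ω => ?_))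
      rw [hsum ω, hF]
      congr 1
      push_cast
      ring
    rw [e2, ← integral_map (((hGmeas 1).prodMk (hBmeas.prodMk hCmeas)).aemeasurable)
        hFcont.aestronglyMeasurable, hprod, integral_prod_symm F hint]
  rw [key]
  have hbd : ∀ y : ℝ × ℝ, ‖∫ x, F (x, y) ∂(P.map (G 1))‖
      ≤ (1 + 4 * t ^ 2 * (α 1 1) ^ 2) ^ (-(1/4) : ℝ) := by
    intro y
    rw [hGgauss 1]
    exact gauss_quad_bound t (α 1 1) y.1 y.2
  calc ‖∫ y, ∫ x, F (x, y) ∂(P.map (G 1)) ∂(P.map fun ω => (B ω, C ω))‖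
      ≤ (1 + 4 * t ^ 2 * (α 1 1) ^ 2) ^ (-(1/4) : ℝ)
        * ((P.map fun ω => (B ω, C ω)) Set.univ).toReal :=
        norm_integral_le_of_norm_le_const (ae_of_all _ hbd)
    _ = (1 + 4 * t ^ 2 * (α 1 1) ^ 2) ^ (-(1/4) : ℝ) := by
        simp

lemma no_atoms_of_charfun_decay (μ : Measure ℝ) [IsProbabilityMeasure μ] {a : ℝ} (ha : a ≠ 0)
    (hφ : ∀ t : ℝ, ‖∫ x, Complex.exp (Complex.I * t * x) ∂μ‖
      ≤ (1 + 4 * t ^ 2 * a ^ 2) ^ (-(1/4) : ℝ)) (z : ℝ) :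
    μ {z} = 0 := by
  classical
  set g : ℝ → ℝ := fun t => (1 + 4 * t ^ 2 * a ^ 2) ^ (-(1/4) : ℝ) with hg
  have hgcont : Continuous g := by
    apply Continuous.rpow_const
    · fun_prop
    · intro t; left; positivity
  have hgnonneg : ∀ t, 0 ≤ g t := fun t => Real.rpow_nonneg (by positivity) _
  have hgle1 : ∀ t, g t ≤ 1 := by
    intro t
    rw [hg]
    calc (1 + 4 * t ^ 2 * a ^ 2) ^ (-(1/4) : ℝ) ≤ (1:ℝ) ^ (-(1/4) : ℝ) :=
          Real.rpow_le_rpow_of_nonpos one_pos (by nlinarith [sq_nonneg (t*a)]) (by norm_num)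
      _ = 1 := Real.one_rpow _
  set h : ℕ → ℝ → ℝ := fun m x =>
    if x = z then 1 else Real.sin (m * (x - z)) / (m * (x - z)) with hh
  have hhmeas : ∀ m, Measurable (h m) := by
    intro m
    apply Measurable.ite (by exact measurableSet_eq)
    · exact measurable_const
    · fun_prop
  have hhbound : ∀ m x, |h m x| ≤ 1 := by
    intro m x
    rw [hh]
    dsimp only
    split_ifs with hx
    · norm_num
    · rcases eq_or_ne ((m : ℝ) * (x - z)) 0 with h0 | h0
      · rw [h0]; simp
      · rw [abs_div]
        rw [div_le_one (abs_pos.mpr h0)]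
        exact Real.abs_sin_le_abs
  -- pointwise limit
  have hlim : ∀ x, Tendsto (fun m : ℕ => h m x) atTop
      (𝓝 (Set.indicator {z} (fun _ => (1:ℝ)) x)) := by
    intro x
    rcases eq_or_ne x z with rfl | hx
    · simp only [hh, if_pos rfl, Set.indicator_of_mem (Set.mem_singleton x)]
      exact tendsto_const_nhds
    · rw [Set.indicator_of_notMem (by simpa using hx)]
      have hy : x - z ≠ 0 := sub_ne_zero.mpr hx
      refine squeeze_zero_norm (a := fun m : ℕ => |x - z|⁻¹ * (1 / m)) (fun m => ?_) ?_
      · 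
        rw [hh]
        dsimp only
        rw [if_neg hx]
        rcases Nat.eq_zero_or_pos m with rfl | hm
        · simp
        · have hm0 : ((m:ℝ)) ≠ 0 := Nat.cast_ne_zero.mpr hm.ne'
          rw [Real.norm_eq_abs, abs_div]
          rw [div_le_iff₀ (abs_pos.mpr (mul_ne_zero hm0 hy))]
          calc |Real.sin (m * (x - z))| ≤ 1 := Real.abs_sin_le_one _
            _ ≤ |x - z|⁻¹ * (1 / m) * |(m:ℝ) * (x - z)| := by
                have hxz : (0:ℝ) < |x - z| := abs_pos.mpr hy
                rw [abs_mul, abs_of_pos (show (0:ℝ) < (m:ℝ) from by exact_mod_cast hm),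
                  show |x - z|⁻¹ * (1 / (m:ℝ)) * ((m:ℝ) * |x - z|)
                    = ((m:ℝ) / (m:ℝ)) * (|x - z| * |x - z|⁻¹) from by ring,
                  div_self hm0, mul_inv_cancel₀ hxz.ne', one_mul]
      · have : Tendsto (fun m : ℕ => (1 : ℝ) / m) atTop (𝓝 0) :=
          tendsto_one_div_atTop_nhds_zero_nat
        simpa using this.const_mul |x - z|⁻¹
  -- dominated convergence
  have hDCT : Tendsto (fun m : ℕ => ∫ x, h m x ∂μ) atTop (𝓝 ((μ {z}).toReal)) := by
    have := tendsto_integral_of_dominated_convergence (F := fun m x => h m x)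
      (f := Set.indicator {z} (fun _ => (1:ℝ))) (bound := fun _ => 1)
      (fun m => ((hhmeas m).aestronglyMeasurable))
      (integrable_const (μ := μ) (1:ℝ))
      (fun m => ae_of_all _ fun x => by rw [Real.norm_eq_abs]; exact hhbound m x)
      (ae_of_all _ hlim)
    have heq : ∫ x, Set.indicator {z} (fun _ => (1:ℝ)) x ∂μ = (μ {z}).toReal := by
      rw [integral_indicator_const _ (measurableSet_singleton z)]
      simp
      rfl
    rwa [heq] at this
  -- interval integral evaluation
  have hIcos : ∀ (m : ℕ) (x : ℝ),
      (∫ t in (-(m:ℝ))..(m:ℝ), Real.cos (t * (x - z)))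
        = if x = z then (2 * (m:ℝ)) else 2 * Real.sin (m * (x - z)) / (x - z) := by
    intro m x
    rcases eq_or_ne x z with rfl | hx
    · rw [if_pos rfl]
      simp only [sub_self, mul_zero, Real.cos_zero]
      rw [intervalIntegral.integral_const, smul_eq_mul, mul_one]
      ring
    · rw [if_neg hx]
      have hy : x - z ≠ 0 := sub_ne_zero.mpr hx
      rw [intervalIntegral.integral_comp_mul_right Real.cos hy, integral_cos, smul_eq_mul]
      rw [show (-(m:ℝ)) * (x - z) = -((m:ℝ) * (x - z)) from by ring, Real.sin_neg]
      field_simp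
      ring
  have hrel : ∀ (m : ℕ), 1 ≤ m → ∀ x : ℝ, h m x
      = (1 / (2 * m)) * ∫ t in (-(m:ℝ))..(m:ℝ), Real.cos (t * (x - z)) := by
    intro m hm x
    have hm0 : ((m:ℝ)) ≠ 0 := by
      have : (0:ℝ) < m := by exact_mod_cast hm
      exact this.ne'
    rw [hIcos m x]
    rcases eq_or_ne x z with rfl | hx
    · rw [if_pos rfl, hh]
      dsimp only
      rw [if_pos rfl]
      field_simp
    · rw [if_neg hx, hh]
      dsimp only
      rw [if_neg hx]
      have hy : x - z ≠ 0 := sub_ne_zero.mpr hx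
      field_simp
  -- inner integral in terms of the characteristic function
  have hexpnorm : ∀ (u : ℝ), ‖Complex.exp (Complex.I * u)‖ = 1 := by
    intro u
    rw [show Complex.I * u = (u:ℂ) * Complex.I from by ring,
      Complex.norm_exp_ofReal_mul_I]
  have hinner : ∀ t : ℝ, (∫ x : ℝ, Real.cos (t * (x - z)) ∂μ)
      = (Complex.exp (-(Complex.I * t * z)) * ∫ x : ℝ, Complex.exp (Complex.I * t * x) ∂μ).re := by
    intro t
    have hcont : Continuous fun x : ℝ => Complex.exp (Complex.I * t * ((x:ℂ) - z)) := by
      apply Complex.continuous_exp.comp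
      fun_prop
    have hint : Integrable (fun x : ℝ => Complex.exp (Complex.I * t * ((x:ℂ) - z))) μ := by
      refine (integrable_const (μ := μ) (1:ℝ)).mono' hcont.aestronglyMeasurable ?_
      refine ae_of_all _ fun x => ?_
      rw [show Complex.I * t * ((x:ℂ) - z) = Complex.I * ((t * (x - z) : ℝ) : ℂ) from by
        push_cast; ring]
      exact le_of_eq (hexpnorm _)
    have e1 : (∫ x : ℝ, Real.cos (t * (x - z)) ∂μ)
        = ∫ x : ℝ, (Complex.exp (Complex.I * t * ((x:ℂ) - z))).re ∂μ := by
      congr 1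
      funext x
      rw [show Complex.I * t * ((x:ℂ) - z) = ((t * (x - z) : ℝ) : ℂ) * Complex.I from by
        push_cast; ring, Complex.exp_ofReal_mul_I_re]
    have e2 : (∫ x : ℝ, Complex.exp (Complex.I * t * ((x:ℂ) - z)) ∂μ)
        = Complex.exp (-(Complex.I * t * z)) * ∫ x : ℝ, Complex.exp (Complex.I * t * x) ∂μ := by
      rw [← integral_const_mul]
      congr 1
      funext x
      rw [← Complex.exp_add]
      congr 1
      ring
    have e4 := integral_re hint
    simp only [RCLike.re_to_complex] at e4
    rw [e1, e4, e2]
  have hWbound : ∀ t : ℝ, |∫ x : ℝ, Real.cos (t * (x - z)) ∂μ| ≤ g t := by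
    intro t
    rw [hinner t]
    calc |(Complex.exp (-(Complex.I * t * z)) * ∫ x : ℝ, Complex.exp (Complex.I * t * x) ∂μ).re|
        ≤ ‖(Complex.exp (-(Complex.I * t * z))
            * ∫ x : ℝ, Complex.exp (Complex.I * t * x) ∂μ)‖ := Complex.abs_re_le_norm _
      _ = ‖(Complex.exp (-(Complex.I * t * z)))‖
            * ‖(∫ x : ℝ, Complex.exp (Complex.I * t * x) ∂μ)‖ := norm_mul _ _
      _ ≤ 1 * g t := by
          refine mul_le_mul ?_ ?_ (norm_nonneg _) zero_le_one
          · rw [show -(Complex.I * t * z) = Complex.I * ((-(t*z) : ℝ) : ℂ) from by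
              push_cast; ring]
            exact le_of_eq (hexpnorm _)
          · exact hφ t
      _ = g t := one_mul _
  -- Fubini
  have hswap : ∀ (m : ℕ), (∫ x : ℝ, (∫ t in (-(m:ℝ))..(m:ℝ), Real.cos (t * (x - z))) ∂μ)
      = ∫ t in (-(m:ℝ))..(m:ℝ), (∫ x : ℝ, Real.cos (t * (x - z)) ∂μ) := by
    intro m
    have hmm : (-(m:ℝ)) ≤ m := by
      have : (0:ℝ) ≤ m := Nat.cast_nonneg m
      linarith
    simp_rw [intervalIntegral.integral_of_le hmm]
    haveI : IsFiniteMeasure (volume.restrict (Set.Ioc (-(m:ℝ)) (m:ℝ))) :=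
      ⟨by rw [Measure.restrict_apply_univ]; exact measure_Ioc_lt_top⟩
    apply MeasureTheory.integral_integral_swap
    have hcont : Continuous (Function.uncurry fun (x t : ℝ) => Real.cos (t * (x - z))) := by
      apply Real.continuous_cos.comp
      fun_prop
    refine (integrable_const (μ := μ.prod (volume.restrict (Set.Ioc (-(m:ℝ)) (m:ℝ)))) (1:ℝ)).mono'
      hcont.aestronglyMeasurable ?_
    refine ae_of_all _ fun p => ?_
    rw [Real.norm_eq_abs]
    exact Real.abs_cos_le_one _
  -- combined bound
  have hbound2 : ∀ m : ℕ, 1 ≤ m → |∫ x, h m x ∂μ|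
      ≤ (1/(2*(m:ℝ))) * |∫ t in (-(m:ℝ))..(m:ℝ), g t| := by
    intro m hm
    have e3 : ∫ x, h m x ∂μ
        = (1/(2*(m:ℝ))) * ∫ t in (-(m:ℝ))..(m:ℝ), (∫ x : ℝ, Real.cos (t * (x - z)) ∂μ) := by
      simp_rw [hrel m hm]
      rw [integral_const_mul, hswap m]
    rw [e3, abs_mul, abs_of_nonneg (show (0:ℝ) ≤ 1/(2*(m:ℝ)) by positivity)]
    refine mul_le_mul_of_nonneg_left ?_ (by positivity)
    rw [← Real.norm_eq_abs (∫ t in (-(m:ℝ))..(m:ℝ), (∫ x : ℝ, Real.cos (t * (x - z)) ∂μ))]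
    refine intervalIntegral.norm_integral_le_abs_of_norm_le ?_ (hgcont.intervalIntegrable _ _)
    refine ae_of_all _ fun t => ?_
    rw [Real.norm_eq_abs]
    exact hWbound t
  -- estimate of the g-integral
  have ha2 : (0:ℝ) < a ^ 2 := lt_of_le_of_ne (sq_nonneg a) (Ne.symm (pow_ne_zero 2 ha))
  set K : ℝ := (4 * a ^ 2) ^ (-(1/4) : ℝ) with hK
  have hK0 : 0 ≤ K := Real.rpow_nonneg (by positivity) _
  have hgK : ∀ t : ℝ, 1 ≤ t → g t ≤ K * t ^ (-(1/2) : ℝ) := by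
    intro t ht
    have ht0 : 0 < t := lt_of_lt_of_le one_pos ht
    calc g t ≤ (4 * t ^ 2 * a ^ 2) ^ (-(1/4) : ℝ) := by
          rw [hg]
          refine Real.rpow_le_rpow_of_nonpos (by positivity) (by nlinarith) (by norm_num)
      _ = K * t ^ (-(1/2) : ℝ) := by
          rw [show 4 * t ^ 2 * a ^ 2 = (4 * a ^ 2) * t ^ 2 from by ring,
            Real.mul_rpow (by positivity) (by positivity), hK]
          congr 1
          rw [← Real.rpow_natCast t 2, ← Real.rpow_mul ht0.le]
          norm_num
  have hIg : ∀ m : ℕ, 1 ≤ m → |∫ t in (-(m:ℝ))..(m:ℝ), g t|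
      ≤ 2 + 4 * K * (m:ℝ) ^ ((1/2) : ℝ) := by
    intro m hm
    have hm1 : (1:ℝ) ≤ (m:ℝ) := by exact_mod_cast hm
    have hmm : (-(m:ℝ)) ≤ (m:ℝ) := by linarith
    have i1 : IntervalIntegrable g volume (-(m:ℝ)) (-1) := hgcont.intervalIntegrable _ _
    have i2 : IntervalIntegrable g volume (-1) 1 := hgcont.intervalIntegrable _ _
    have i3 : IntervalIntegrable g volume 1 (m:ℝ) := hgcont.intervalIntegrable _ _
    have hsplit : (∫ t in (-(m:ℝ))..(m:ℝ), g t)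
        = ((∫ t in (-(m:ℝ))..(-1:ℝ), g t) + (∫ t in (-1:ℝ)..(1:ℝ), g t))
          + (∫ t in (1:ℝ)..(m:ℝ), g t) := by
      rw [intervalIntegral.integral_add_adjacent_intervals i1 i2,
        intervalIntegral.integral_add_adjacent_intervals (i1.trans i2) i3]
    have p1 : (∫ t in (-(m:ℝ))..(-1:ℝ), g t) = ∫ t in (1:ℝ)..(m:ℝ), g t := by
      have e5 : (∫ t in (1:ℝ)..(m:ℝ), g (-t)) = ∫ t in (-(m:ℝ))..(-1:ℝ), g t :=
        intervalIntegral.integral_comp_neg g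
      rw [← e5]
      apply intervalIntegral.integral_congr
      intro t _
      rw [hg]
      dsimp only
      rw [neg_pow]
      norm_num
    have p2 : (∫ t in (-1:ℝ)..(1:ℝ), g t) ≤ 2 := by
      have h12 : (∫ t in (-1:ℝ)..(1:ℝ), g t) ≤ ∫ _t in (-1:ℝ)..(1:ℝ), (1:ℝ) :=
        intervalIntegral.integral_mono_on (by norm_num) i2 intervalIntegrable_const
          (fun t _ => hgle1 t)
      have hconst : (∫ _t in (-1:ℝ)..(1:ℝ), (1:ℝ)) = 2 := by
        rw [intervalIntegral.integral_const, smul_eq_mul, mul_one]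
        norm_num
      linarith [h12, hconst.le]
    have p3 : (∫ t in (1:ℝ)..(m:ℝ), g t) ≤ 2 * K * (m:ℝ) ^ ((1/2) : ℝ) := by
      have hmono : (∫ t in (1:ℝ)..(m:ℝ), g t)
          ≤ ∫ t in (1:ℝ)..(m:ℝ), K * t ^ (-(1/2) : ℝ) := by
        refine intervalIntegral.integral_mono_on hm1 i3
          ((intervalIntegral.intervalIntegrable_rpow' (by norm_num)).const_mul K) ?_
        intro t ht
        exact hgK t ht.1
      have heval : (∫ t in (1:ℝ)..(m:ℝ), K * t ^ (-(1/2) : ℝ))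
          = K * (((m:ℝ) ^ ((1/2):ℝ) - 1) / (1/2)) := by
        rw [intervalIntegral.integral_const_mul, integral_rpow (Or.inl (by norm_num))]
        norm_num
      have hroot : (0:ℝ) ≤ (m:ℝ) ^ ((1/2):ℝ) := Real.rpow_nonneg (by positivity) _
      calc (∫ t in (1:ℝ)..(m:ℝ), g t) ≤ K * (((m:ℝ) ^ ((1/2):ℝ) - 1) / (1/2)) :=
            hmono.trans heval.le
        _ ≤ 2 * K * (m:ℝ) ^ ((1/2) : ℝ) := by nlinarith
    have hnn : 0 ≤ ∫ t in (-(m:ℝ))..(m:ℝ), g t :=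
      intervalIntegral.integral_nonneg hmm (fun t _ => hgnonneg t)
    rw [abs_of_nonneg hnn, hsplit, p1]
    linarith
  -- squeeze to zero
  have hlim0 : Tendsto (fun m : ℕ => ∫ x, h m x ∂μ) atTop (𝓝 0) := by
    apply squeeze_zero_norm'
      (a := fun m : ℕ => (1/(2*(m:ℝ))) * (2 + 4 * K * (m:ℝ) ^ ((1/2):ℝ)))
    · filter_upwards [eventually_ge_atTop 1] with m hm
      rw [Real.norm_eq_abs]
      calc |∫ x, h m x ∂μ| ≤ (1/(2*(m:ℝ))) * |∫ t in (-(m:ℝ))..(m:ℝ), g t| := hbound2 m hm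
        _ ≤ (1/(2*(m:ℝ))) * (2 + 4 * K * (m:ℝ) ^ ((1/2):ℝ)) :=
            mul_le_mul_of_nonneg_left (hIg m hm) (by positivity)
    · have hcongr : ∀ᶠ m : ℕ in atTop, (1/(2*(m:ℝ))) * (2 + 4 * K * (m:ℝ) ^ ((1/2):ℝ))
          = (m:ℝ)⁻¹ + (2 * K) * ((m:ℝ) ^ ((1/2):ℝ))⁻¹ := by
        filter_upwards [eventually_ge_atTop 1] with m hm
        have hm0 : (0:ℝ) < m := by exact_mod_cast hm
        have hs0 : (0:ℝ) < (m:ℝ) ^ ((1/2):ℝ) := Real.rpow_pos_of_pos hm0 _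
        have hms : (m:ℝ) = (m:ℝ) ^ ((1/2):ℝ) * (m:ℝ) ^ ((1/2):ℝ) := by
          rw [← Real.rpow_add hm0]
          norm_num
        have e6 : (m:ℝ) ^ ((1/2):ℝ) / (m:ℝ) = ((m:ℝ) ^ ((1/2):ℝ))⁻¹ := by
          field_simp
          rw [sq, ← Real.rpow_add hm0]
          norm_num
        rw [show (1/(2*(m:ℝ))) * (2 + 4 * K * (m:ℝ) ^ ((1/2):ℝ))
            = (m:ℝ)⁻¹ + (2 * K) * ((m:ℝ) ^ ((1/2):ℝ) / (m:ℝ)) from by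
            field_simp; ring, e6]
      rw [tendsto_congr' hcongr]
      have t1 : Tendsto (fun m : ℕ => ((m:ℝ))⁻¹) atTop (𝓝 0) :=
        tendsto_inv_atTop_nhds_zero_nat
      have t2 : Tendsto (fun m : ℕ => ((m:ℝ) ^ ((1/2):ℝ))⁻¹) atTop (𝓝 0) :=
        Filter.Tendsto.inv_tendsto_atTop
          ((tendsto_rpow_atTop (by norm_num)).comp tendsto_natCast_atTop_atTop)
      simpa using t1.add (t2.const_mul (2*K))
  have hzero : (μ {z}).toReal = 0 := tendsto_nhds_unique hDCT hlim0
  rcases (ENNReal.toReal_eq_zero_iff _).mp hzero with h0 | htop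
  · exact h0
  · exact absurd htop (measure_ne_top μ _)

/-- **Lemma 3.9.** If quadratic forms `∑_{j,k=1}^{2n} α_{jk} G_j G_k` in
i.i.d. standard Gaussians converge in probability to `Z` and `α_{11} ≠ 0`,
then `Z` has a continuous distribution. -/
theorem statement14 {Ω : Type} [MeasurableSpace Ω] (P : Measure Ω)
    [IsProbabilityMeasure P] (G : ℕ → Ω → ℝ)
    (hGmeas : ∀ j, Measurable (G j))
    (hGindep : iIndepFun G P)
    (hGgauss : ∀ j, P.map (G j) = gaussianReal 0 1)
    (α : ℕ → ℕ → ℝ) (Z : Ω → ℝ) (hα : α 1 1 ≠ 0)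
    (hconv : ∀ ε > 0, Tendsto (fun n => P {ω | ε ≤
      |(∑ j ∈ Finset.Icc 1 (2 * n), ∑ k ∈ Finset.Icc 1 (2 * n),
        α j k * (G j ω * G k ω)) - Z ω|}) atTop (nhds 0)) :
    ∀ z : ℝ, P {ω | Z ω = z} = 0 := by
  classical
  set S : ℕ → Ω → ℝ := fun n ω => ∑ j ∈ Finset.Icc 1 (2 * n), ∑ k ∈ Finset.Icc 1 (2 * n),
      α j k * (G j ω * G k ω) with hS
  have hSmeas : ∀ n, Measurable (S n) := by
    intro n
    apply Finset.measurable_sum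
    intro j _
    apply Finset.measurable_sum
    intro k _
    exact measurable_const.mul ((hGmeas j).mul (hGmeas k))
  -- choose a subsequence
  have hsel : ∀ k : ℕ, ∃ n : ℕ, 1 ≤ n ∧
      P {ω | (1/2:ℝ)^k ≤ |S n ω - Z ω|} ≤ (1/2 : ℝ≥0∞)^k := by
    intro k
    have hε : (0:ℝ) < (1/2)^k := by positivity
    have h2 : (0:ℝ≥0∞) < (1/2)^k := ENNReal.pow_pos (by norm_num) k
    have hev : ∀ᶠ n in atTop, P {ω | (1/2:ℝ)^k ≤ |S n ω - Z ω|} < (1/2 : ℝ≥0∞)^k :=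
      (hconv ((1/2)^k) hε).eventually_lt_const h2
    obtain ⟨n, hn1, hn2⟩ := ((eventually_ge_atTop 1).and hev).exists
    exact ⟨n, hn1, hn2.le⟩
  set n : ℕ → ℕ := fun k => (hsel k).choose with hn
  have hn1 : ∀ k, 1 ≤ n k := fun k => (hsel k).choose_spec.1
  set A : ℕ → Set Ω := fun k => {ω | (1/2:ℝ)^k ≤ |S (n k) ω - Z ω|} with hA
  have hAP : ∀ k, P (A k) ≤ (1/2 : ℝ≥0∞)^k := fun k => (hsel k).choose_spec.2
  set Bad : Set Ω := {ω | ¬ Tendsto (fun k => S (n k) ω) atTop (𝓝 (Z ω))} with hBadDef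
  have hBad : P Bad = 0 := by
    have hsub : ∀ m : ℕ, Bad ⊆ ⋃ j : ℕ, A (m + j) := by
      intro m ω hω
      by_contra hc
      simp only [Set.mem_iUnion, not_exists] at hc
      apply hω
      rw [Metric.tendsto_atTop]
      intro ε hε
      obtain ⟨K, hK⟩ := exists_pow_lt_of_lt_one hε (by norm_num : (1/2:ℝ) < 1)
      refine ⟨max m K, fun k hk => ?_⟩
      have hkm : m ≤ k := le_trans (le_max_left _ _) hk
      obtain ⟨j, rfl⟩ := Nat.exists_eq_add_of_le hkm
      have h1 : ¬ ((1/2:ℝ)^(m+j) ≤ |S (n (m+j)) ω - Z ω|) := hc j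
      push_neg at h1
      rw [Real.dist_eq]
      calc |S (n (m+j)) ω - Z ω| < (1/2)^(m+j) := h1
        _ ≤ (1/2)^K := pow_le_pow_of_le_one (by norm_num) (by norm_num)
            (le_trans (le_max_right _ _) hk)
        _ < ε := hK
    have hmb : ∀ m : ℕ, P Bad ≤ 2 * (1/2 : ℝ≥0∞)^m := by
      intro m
      calc P Bad ≤ P (⋃ j : ℕ, A (m + j)) := measure_mono (hsub m)
        _ ≤ ∑' j : ℕ, P (A (m + j)) := measure_iUnion_le _
        _ ≤ ∑' j : ℕ, (1/2 : ℝ≥0∞)^(m+j) := ENNReal.tsum_le_tsum fun j => hAP (m+j)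
        _ = (1/2 : ℝ≥0∞)^m * ∑' j : ℕ, (1/2 : ℝ≥0∞)^j := by
            simp_rw [pow_add]
            rw [ENNReal.tsum_mul_left]
        _ = (1/2 : ℝ≥0∞)^m * 2 := by
            rw [ENNReal.tsum_geometric]
            norm_num
        _ = 2 * (1/2 : ℝ≥0∞)^m := mul_comm _ _
    have hto0 : Tendsto (fun m : ℕ => 2 * (1/2 : ℝ≥0∞)^m) atTop (𝓝 0) := by
      have h1 := ENNReal.tendsto_pow_atTop_nhds_zero_of_lt_one
        (by norm_num : (1/2 : ℝ≥0∞) < 1)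
      have h2 := ENNReal.Tendsto.const_mul h1 (Or.inr (by norm_num : (2:ℝ≥0∞) ≠ ⊤))
      simpa using h2
    have : P Bad ≤ 0 := le_of_tendsto_of_tendsto' tendsto_const_nhds hto0 hmb
    exact nonpos_iff_eq_zero.mp this
  have hae : ∀ᵐ ω ∂P, ∃ L, Tendsto (fun k => S (n k) ω) atTop (𝓝 L) := by
    rw [ae_iff]
    refine measure_mono_null ?_ hBad
    intro ω hω
    simp only [Set.mem_setOf_eq, not_exists] at hω
    exact fun hT => hω (Z ω) hT
  obtain ⟨Z', hZ'meas, hZ'lim⟩ := measurable_limit_of_tendsto_metrizable_ae (μ := P)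
    (fun k => (hSmeas (n k)).aemeasurable) hae
  have hZnotlim : P {ω | ¬ Tendsto (fun k => S (n k) ω) atTop (𝓝 (Z' ω))} = 0 := by
    rw [← ae_iff] at *
    exact hZ'lim
  have hZZ' : P {ω | Z ω ≠ Z' ω} = 0 := by
    refine measure_mono_null ?_
      (measure_union_null hBad hZnotlim)
    intro ω hω
    by_contra hc
    simp only [hBadDef, Set.mem_union, Set.mem_setOf_eq, not_or, not_not] at hc
    exact hω (tendsto_nhds_unique hc.1 hc.2)
  -- characteristic function bound for Z'
  have hchar : ∀ t : ℝ, ‖∫ ω, Complex.exp (Complex.I * t * (Z' ω)) ∂P‖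
      ≤ (1 + 4 * t ^ 2 * (α 1 1) ^ 2) ^ (-(1/4) : ℝ) := by
    intro t
    have hcont : Continuous fun x : ℝ => Complex.exp (Complex.I * t * x) := by
      apply Complex.continuous_exp.comp
      fun_prop
    have hnorm1 : ∀ x : ℝ, ‖Complex.exp (Complex.I * t * x)‖ = 1 := by
      intro x
      rw [show Complex.I * t * x = ((t * x : ℝ) : ℂ) * Complex.I from by push_cast; ring,
        Complex.norm_exp_ofReal_mul_I]
    have htend : Tendsto (fun k => ∫ ω, Complex.exp (Complex.I * t * (S (n k) ω)) ∂P) atTop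
        (𝓝 (∫ ω, Complex.exp (Complex.I * t * (Z' ω)) ∂P)) := by
      apply tendsto_integral_of_dominated_convergence (bound := fun _ => (1:ℝ))
      · intro k
        exact (Complex.measurable_exp.comp ((Complex.measurable_ofReal.comp
          (hSmeas (n k))).const_mul (Complex.I * t))).aestronglyMeasurable
      · exact integrable_const (μ := P) (1:ℝ)
      · intro k
        exact ae_of_all _ fun ω => le_of_eq (hnorm1 _)
      · filter_upwards [hZ'lim] with ω hω
        exact (hcont.continuousAt.tendsto.comp hω)
    refine le_of_tendsto htend.norm (Eventually.of_forall fun k => ?_)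
    exact charfun_Sn_bound P G hGmeas hGindep hGgauss α t (hn1 k)
  -- conclude
  intro z
  haveI : IsProbabilityMeasure (P.map Z') := Measure.isProbabilityMeasure_map hZ'meas.aemeasurable
  have hmapchar : ∀ t : ℝ, ‖∫ x, Complex.exp (Complex.I * t * x) ∂(P.map Z')‖
      ≤ (1 + 4 * t ^ 2 * (α 1 1) ^ 2) ^ (-(1/4) : ℝ) := by
    intro t
    have hcont : Continuous fun x : ℝ => Complex.exp (Complex.I * t * x) := by
      apply Complex.continuous_exp.comp
      fun_prop
    rw [integral_map hZ'meas.aemeasurable hcont.aestronglyMeasurable]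
    exact hchar t
  have hZ'atom : P {ω | Z' ω = z} = 0 := by
    have := no_atoms_of_charfun_decay (P.map Z') hα hmapchar z
    rwa [Measure.map_apply hZ'meas (measurableSet_singleton z)] at this
  have hle : P {ω | Z ω = z} ≤ 0 :=
    calc P {ω | Z ω = z} ≤ P ({ω | Z' ω = z} ∪ {ω | Z ω ≠ Z' ω}) := by
          apply measure_mono
          intro ω hω
          by_cases h : Z ω = Z' ω
          · exact Or.inl (by rw [Set.mem_setOf_eq, ← h]; exact hω)
          · exact Or.inr h
      _ ≤ P {ω | Z' ω = z} + P {ω | Z ω ≠ Z' ω} := measure_union_le _ _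
      _ = 0 := by rw [hZ'atom, hZZ', add_zero]
  exact nonpos_iff_eq_zero.mp hle

end
end

section
/- For all x,y ∈ ℝ, the limits lim_{N→∞} (1/N) ∑_{k=1}^N sin(kx) sin(ky), lim_{N→∞} (1/N) ∑_{k=1}^N sin(kx) cos(ky), and lim_{N→∞} (1/N) ∑_{k=1}^N cos(kx) cos(ky) all exist. Furthermore, for all x,y ∈ ℝ, the limit lim_{N→∞} N^{−2} ∑_{i,j=1}^N [cos(ix + jy) + cos(iy + jx)]² exists and is strictly positive. -/
open MeasureTheory ProbabilityTheory Filter Real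

noncomputable section

open Finset Classical in
/-- The Cesàro limit of `cos (k θ)`. -/
noncomputable def Av (θ : ℝ) : ℝ := if ∃ m : ℤ, θ = 2 * π * m then 1 else 0

lemma Av_nonneg (θ : ℝ) : 0 ≤ Av θ := by
  unfold Av; split <;> norm_num

open Finset in
lemma avg_zero_of_bounded {f : ℕ → ℝ} {C : ℝ}
    (h : ∀ N : ℕ, |∑ k ∈ Icc 1 N, f k| ≤ C) :
    Tendsto (fun N : ℕ => (N : ℝ)⁻¹ * ∑ k ∈ Icc 1 N, f k) atTop (nhds 0) := by
  apply squeeze_zero_norm (fun N : ℕ => ?_) (tendsto_const_div_atTop_nhds_zero_nat C)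
  rw [Real.norm_eq_abs, abs_mul, abs_inv, Nat.abs_cast, div_eq_inv_mul]
  rcases Nat.eq_zero_or_pos N with h0 | h0
  · simp [h0]
  · exact mul_le_mul_of_nonneg_left (h N) (by positivity)

open Finset in
lemma exp_sum_bounded {θ : ℝ} (h : Complex.exp (θ * Complex.I) ≠ 1) (N : ℕ) :
    ‖∑ k ∈ Icc 1 N, Complex.exp (((k : ℝ) * θ : ℝ) * Complex.I)‖ ≤
      2 / ‖Complex.exp (θ * Complex.I) - 1‖ + 1 := by
  set z := Complex.exp (θ * Complex.I) with hz
  have hzk : ∀ k : ℕ, Complex.exp (((k : ℝ) * θ : ℝ) * Complex.I) = z ^ k := by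
    intro k
    rw [hz, ← Complex.exp_nat_mul]
    push_cast
    ring_nf
  have hzabs : ‖z‖ = 1 := by
    rw [hz, Complex.norm_exp_ofReal_mul_I]
  have hsum : ∑ k ∈ Icc 1 N, Complex.exp (((k : ℝ) * θ : ℝ) * Complex.I)
      = (∑ k ∈ range (N + 1), z ^ k) - 1 := by
    rw [Finset.sum_congr rfl (fun k _ => hzk k), Finset.range_eq_Ico,
      ← Finset.sum_Ico_consecutive _ (Nat.zero_le 1) (Nat.le_add_left 1 N)]
    simp [← Finset.Ico_add_one_right_eq_Icc]
  rw [hsum, geom_sum_eq h]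
  have hne : ‖z - 1‖ ≠ 0 := by
    simp only [ne_eq, norm_eq_zero, sub_eq_zero]; exact h
  have hpos : 0 < ‖z - 1‖ := lt_of_le_of_ne (norm_nonneg _) (Ne.symm hne)
  have h2 : ‖z ^ (N + 1) - 1‖ ≤ 2 := by
    calc ‖z ^ (N + 1) - 1‖ ≤ ‖z ^ (N + 1)‖ + 1 := by simpa using norm_sub_le (z ^ (N + 1)) 1
      _ = 2 := by rw [norm_pow, hzabs]; norm_num
  calc ‖(z ^ (N + 1) - 1) / (z - 1) - 1‖
      ≤ ‖(z ^ (N + 1) - 1) / (z - 1)‖ + 1 := by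
        simpa using norm_sub_le ((z ^ (N + 1) - 1) / (z - 1)) 1
    _ ≤ 2 / ‖z - 1‖ + 1 := by
        rw [norm_div]
        gcongr

lemma not_per_exp_ne_one {θ : ℝ} (h : ¬ ∃ m : ℤ, θ = 2 * π * m) :
    Complex.exp (θ * Complex.I) ≠ 1 := by
  intro hc
  rw [Complex.exp_eq_one_iff] at hc
  obtain ⟨n, hn⟩ := hc
  have h2 : (θ : ℂ) = (n : ℂ) * (2 * π) :=
    mul_right_cancel₀ Complex.I_ne_zero (by rw [hn]; ring)
  have h3 : (θ : ℂ) = ((2 * π * n : ℝ) : ℂ) := by push_cast; rw [h2]; ring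
  exact h ⟨n, Complex.ofReal_injective h3⟩

open Finset in
lemma cosAvg (θ : ℝ) :
    Tendsto (fun N : ℕ => (N : ℝ)⁻¹ * ∑ k ∈ Icc 1 N, Real.cos (k * θ)) atTop (nhds (Av θ)) := by
  unfold Av
  split
  · rename_i hper
    obtain ⟨m, rfl⟩ := hper
    have hc : ∀ k : ℕ, Real.cos ((k : ℝ) * (2 * π * m)) = 1 := by
      intro k
      have : (k : ℝ) * (2 * π * m) = ((k * m : ℤ) : ℝ) * (2 * π) := by push_cast; ring
      rw [this, Real.cos_int_mul_two_pi]
    apply Tendsto.congr' ?_ tendsto_const_nhds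
    filter_upwards [eventually_ge_atTop 1] with N hN
    have hN' : (N : ℝ) ≠ 0 := Nat.cast_ne_zero.mpr (by omega)
    rw [Finset.sum_congr rfl (fun k _ => hc k), Finset.sum_const, Nat.card_Icc,
      Nat.add_sub_cancel, nsmul_eq_mul, mul_one]
    field_simp
  · rename_i hper
    have hne := not_per_exp_ne_one hper
    apply avg_zero_of_bounded (C := 2 / ‖Complex.exp (θ * Complex.I) - 1‖ + 1)
    intro N
    have : ∑ k ∈ Icc 1 N, Real.cos (k * θ)
        = (∑ k ∈ Icc 1 N, Complex.exp (((k : ℝ) * θ : ℝ) * Complex.I)).re := by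
      rw [Complex.re_sum]
      exact Finset.sum_congr rfl fun k _ => (Complex.exp_ofReal_mul_I_re _).symm
    rw [this]
    exact (Complex.abs_re_le_norm _).trans (exp_sum_bounded hne N)

open Finset in
lemma sinAvg (θ : ℝ) :
    Tendsto (fun N : ℕ => (N : ℝ)⁻¹ * ∑ k ∈ Icc 1 N, Real.sin (k * θ)) atTop (nhds 0) := by
  by_cases hper : ∃ m : ℤ, θ = 2 * π * m
  · obtain ⟨m, rfl⟩ := hper
    have hs : ∀ k : ℕ, Real.sin ((k : ℝ) * (2 * π * m)) = 0 := by
      intro k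
      have : (k : ℝ) * (2 * π * m) = ((2 * k * m : ℤ) : ℝ) * π := by push_cast; ring
      rw [this, Real.sin_int_mul_pi]
    simp only [Finset.sum_congr rfl (fun k _ => hs k), Finset.sum_const_zero, mul_zero]
    exact tendsto_const_nhds
  · have hne := not_per_exp_ne_one hper
    apply avg_zero_of_bounded (C := 2 / ‖Complex.exp (θ * Complex.I) - 1‖ + 1)
    intro N
    have : ∑ k ∈ Icc 1 N, Real.sin (k * θ)
        = (∑ k ∈ Icc 1 N, Complex.exp (((k : ℝ) * θ : ℝ) * Complex.I)).im := by
      rw [Complex.im_sum]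
      exact Finset.sum_congr rfl fun k _ => (Complex.exp_ofReal_mul_I_im _).symm
    rw [this]
    exact (Complex.abs_im_le_norm _).trans (exp_sum_bounded hne N)

open Finset in
lemma doubleAvg (a b : ℝ) :
    Tendsto (fun N : ℕ => ((N : ℝ) ^ 2)⁻¹ * ∑ i ∈ Icc 1 N, ∑ j ∈ Icc 1 N,
      Real.cos (i * a + j * b)) atTop (nhds (Av a * Av b)) := by
  have key : ∀ N : ℕ, ((N : ℝ) ^ 2)⁻¹ * ∑ i ∈ Icc 1 N, ∑ j ∈ Icc 1 N, Real.cos (i * a + j * b)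
      = ((N : ℝ)⁻¹ * ∑ i ∈ Icc 1 N, Real.cos (i * a)) * ((N : ℝ)⁻¹ * ∑ j ∈ Icc 1 N, Real.cos (j * b))
        - ((N : ℝ)⁻¹ * ∑ i ∈ Icc 1 N, Real.sin (i * a)) * ((N : ℝ)⁻¹ * ∑ j ∈ Icc 1 N, Real.sin (j * b)) := by
    intro N
    have h1 : ∀ i j : ℕ, Real.cos ((i : ℝ) * a + j * b)
        = Real.cos (i * a) * Real.cos (j * b) - Real.sin (i * a) * Real.sin (j * b) :=
      fun i j => Real.cos_add _ _
    rw [Finset.sum_congr rfl fun i _ => Finset.sum_congr rfl fun j _ => h1 i j]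
    simp only [Finset.sum_sub_distrib, ← Finset.mul_sum, ← Finset.sum_mul]
    ring
  have := ((cosAvg a).mul (cosAvg b)).sub ((sinAvg a).mul (sinAvg b))
  simp only [mul_zero, sub_zero] at this
  exact Tendsto.congr (fun N => (key N).symm) this

open Finset in
lemma doubleOne :
    Tendsto (fun N : ℕ => ((N : ℝ) ^ 2)⁻¹ * ∑ _i ∈ Icc 1 N, ∑ _j ∈ Icc 1 N, (1 : ℝ))
      atTop (nhds 1) := by
  apply Tendsto.congr' ?_ tendsto_const_nhds
  filter_upwards [eventually_ge_atTop 1] with N hN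
  have hN' : (N : ℝ) ≠ 0 := Nat.cast_ne_zero.mpr (by omega)
  simp only [Finset.sum_const, Nat.card_Icc, Nat.add_sub_cancel, smul_eq_mul, mul_one]
  field_simp
  ring

lemma sq_ident (u v : ℝ) : (Real.cos u + Real.cos v) ^ 2
    = 1 + (1/2) * Real.cos (2 * u) + (1/2) * Real.cos (2 * v)
      + Real.cos (u + v) + Real.cos (u - v) := by
  rw [Real.cos_two_mul, Real.cos_two_mul, Real.cos_add, Real.cos_sub]
  ring

/-- **Fact 3.10.** The Cesàro averages of products of sines and cosines
converge, and the limit in the displayed quadratic expression exists and is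
strictly positive. -/
theorem statement15 :
    (∀ x y : ℝ,
      (∃ L : ℝ, Tendsto (fun N : ℕ =>
        (N : ℝ)⁻¹ * ∑ k ∈ Finset.Icc 1 N, Real.sin (k * x) * Real.sin (k * y))
        atTop (nhds L)) ∧
      (∃ L : ℝ, Tendsto (fun N : ℕ =>
        (N : ℝ)⁻¹ * ∑ k ∈ Finset.Icc 1 N, Real.sin (k * x) * Real.cos (k * y))
        atTop (nhds L)) ∧
      (∃ L : ℝ, Tendsto (fun N : ℕ =>
        (N : ℝ)⁻¹ * ∑ k ∈ Finset.Icc 1 N, Real.cos (k * x) * Real.cos (k * y))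
        atTop (nhds L))) ∧
    ∀ x y : ℝ, ∃ L : ℝ, 0 < L ∧
      Tendsto (fun N : ℕ =>
        ((N : ℝ) ^ 2)⁻¹ * ∑ i ∈ Finset.Icc 1 N, ∑ j ∈ Finset.Icc 1 N,
          (Real.cos (i * x + j * y) + Real.cos (i * y + j * x)) ^ 2)
        atTop (nhds L) := by
  constructor
  · intro x y
    refine ⟨⟨(Av (x - y) - Av (x + y)) / 2, ?_⟩, ⟨0, ?_⟩, ⟨(Av (x - y) + Av (x + y)) / 2, ?_⟩⟩
    · have key : ∀ N : ℕ, (N : ℝ)⁻¹ * ∑ k ∈ Finset.Icc 1 N, Real.sin (k * x) * Real.sin (k * y)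
          = ((N : ℝ)⁻¹ * ∑ k ∈ Finset.Icc 1 N, Real.cos (k * (x - y))
            - (N : ℝ)⁻¹ * ∑ k ∈ Finset.Icc 1 N, Real.cos (k * (x + y))) / 2 := by
        intro N
        have h : ∀ k : ℕ, Real.sin (k * x) * Real.sin (k * y)
            = (Real.cos ((k : ℝ) * (x - y)) - Real.cos ((k : ℝ) * (x + y))) / 2 := by
          intro k
          rw [mul_sub, mul_add, Real.cos_sub, Real.cos_add]; ring
        rw [Finset.sum_congr rfl fun k _ => h k, ← Finset.sum_div, Finset.sum_sub_distrib]
        ring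
      exact Tendsto.congr (fun N => (key N).symm) (((cosAvg (x - y)).sub (cosAvg (x + y))).div_const 2)
    · have key : ∀ N : ℕ, (N : ℝ)⁻¹ * ∑ k ∈ Finset.Icc 1 N, Real.sin (k * x) * Real.cos (k * y)
          = ((N : ℝ)⁻¹ * ∑ k ∈ Finset.Icc 1 N, Real.sin (k * (x + y))
            + (N : ℝ)⁻¹ * ∑ k ∈ Finset.Icc 1 N, Real.sin (k * (x - y))) / 2 := by
        intro N
        have h : ∀ k : ℕ, Real.sin (k * x) * Real.cos (k * y)
            = (Real.sin ((k : ℝ) * (x + y)) + Real.sin ((k : ℝ) * (x - y))) / 2 := by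
          intro k
          rw [mul_sub, mul_add, Real.sin_sub, Real.sin_add]; ring
        rw [Finset.sum_congr rfl fun k _ => h k, ← Finset.sum_div, Finset.sum_add_distrib]
        ring
      have := ((sinAvg (x + y)).add (sinAvg (x - y))).div_const 2
      simp only [add_zero, zero_div] at this
      exact Tendsto.congr (fun N => (key N).symm) this
    · have key : ∀ N : ℕ, (N : ℝ)⁻¹ * ∑ k ∈ Finset.Icc 1 N, Real.cos (k * x) * Real.cos (k * y)
          = ((N : ℝ)⁻¹ * ∑ k ∈ Finset.Icc 1 N, Real.cos (k * (x - y))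
            + (N : ℝ)⁻¹ * ∑ k ∈ Finset.Icc 1 N, Real.cos (k * (x + y))) / 2 := by
        intro N
        have h : ∀ k : ℕ, Real.cos (k * x) * Real.cos (k * y)
            = (Real.cos ((k : ℝ) * (x - y)) + Real.cos ((k : ℝ) * (x + y))) / 2 := by
          intro k
          rw [mul_sub, mul_add, Real.cos_sub, Real.cos_add]; ring
        rw [Finset.sum_congr rfl fun k _ => h k, ← Finset.sum_div, Finset.sum_add_distrib]
        ring
      exact Tendsto.congr (fun N => (key N).symm) (((cosAvg (x - y)).add (cosAvg (x + y))).div_const 2)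
  · intro x y
    set L : ℝ := 1 + (1/2) * (Av (2*x) * Av (2*y)) + (1/2) * (Av (2*y) * Av (2*x))
        + Av (x+y) * Av (x+y) + Av (x-y) * Av (y-x) with hL
    refine ⟨L, ?_, ?_⟩
    · have h1 := mul_nonneg (Av_nonneg (2*x)) (Av_nonneg (2*y))
      have h2 := mul_nonneg (Av_nonneg (2*y)) (Av_nonneg (2*x))
      have h3 := mul_nonneg (Av_nonneg (x+y)) (Av_nonneg (x+y))
      have h4 := mul_nonneg (Av_nonneg (x-y)) (Av_nonneg (y-x))
      rw [hL]; linarith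
    · have key : ∀ N : ℕ, ((N : ℝ) ^ 2)⁻¹ * ∑ i ∈ Finset.Icc 1 N, ∑ j ∈ Finset.Icc 1 N,
          (Real.cos (i * x + j * y) + Real.cos (i * y + j * x)) ^ 2
          = ((N : ℝ) ^ 2)⁻¹ * (∑ _i ∈ Finset.Icc 1 N, ∑ _j ∈ Finset.Icc 1 N, (1 : ℝ))
            + (1/2) * (((N : ℝ) ^ 2)⁻¹ * ∑ i ∈ Finset.Icc 1 N, ∑ j ∈ Finset.Icc 1 N,
                Real.cos (i * (2*x) + j * (2*y)))
            + (1/2) * (((N : ℝ) ^ 2)⁻¹ * ∑ i ∈ Finset.Icc 1 N, ∑ j ∈ Finset.Icc 1 N,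
                Real.cos (i * (2*y) + j * (2*x)))
            + ((N : ℝ) ^ 2)⁻¹ * ∑ i ∈ Finset.Icc 1 N, ∑ j ∈ Finset.Icc 1 N,
                Real.cos (i * (x+y) + j * (x+y))
            + ((N : ℝ) ^ 2)⁻¹ * ∑ i ∈ Finset.Icc 1 N, ∑ j ∈ Finset.Icc 1 N,
                Real.cos (i * (x-y) + j * (y-x)) := by
        intro N
        have h : ∀ i j : ℕ,
            (Real.cos ((i:ℝ) * x + j * y) + Real.cos ((i:ℝ) * y + j * x)) ^ 2
            = 1 + (1/2) * Real.cos ((i:ℝ) * (2*x) + j * (2*y))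
              + (1/2) * Real.cos ((i:ℝ) * (2*y) + j * (2*x))
              + Real.cos ((i:ℝ) * (x+y) + j * (x+y))
              + Real.cos ((i:ℝ) * (x-y) + j * (y-x)) := by
          intro i j
          have e1 : (i:ℝ) * (2*x) + j * (2*y) = 2 * ((i:ℝ) * x + j * y) := by ring
          have e2 : (i:ℝ) * (2*y) + j * (2*x) = 2 * ((i:ℝ) * y + j * x) := by ring
          have e3 : (i:ℝ) * (x+y) + j * (x+y) = ((i:ℝ) * x + j * y) + ((i:ℝ) * y + j * x) := by ring
          have e4 : (i:ℝ) * (x-y) + j * (y-x) = ((i:ℝ) * x + j * y) - ((i:ℝ) * y + j * x) := by ring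
          rw [e1, e2, e3, e4]
          exact sq_ident _ _
        rw [Finset.sum_congr rfl fun i _ => Finset.sum_congr rfl fun j _ => h i j]
        simp only [Finset.sum_add_distrib, ← Finset.mul_sum]
        ring
      have tend := ((((doubleOne.add ((doubleAvg (2*x) (2*y)).const_mul (1/2))).add
          ((doubleAvg (2*y) (2*x)).const_mul (1/2))).add
          (doubleAvg (x+y) (x+y))).add (doubleAvg (x-y) (y-x)))
      rw [hL]
      exact Tendsto.congr (fun N => (key N).symm) tend

end
end
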